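/- If x̂ and p̂ are symmetric operators on a complex inner product space with standard deviations Δx̂, Δp̂ in a unit state ψ, and [x̂,p̂]ψ = i(1 + α x̂² + β p̂²)ψ with α, β ≥ 0, then Δx̂ · Δp̂ ≥ (1/2)(1 + α(Δx̂)² + β(Δp̂)²) whenever ⟨ψ, x̂ψ⟩ = ⟨ψ, p̂ψ⟩ = 0 (so that ⟨x̂²⟩ = (Δx̂)², ⟨p̂²⟩ = (Δp̂)²). -/

import Mathlib

open scoped InnerProductSpace

theorem deformed_uncertainty_relation {H : Type*} [NormedAddCommGroup H]
    [InnerProductSpace ℂ H]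
    (x p : H →ₗ[ℂ] H)
    (hx : ∀ u v : H, ⟪x u, v⟫_ℂ = ⟪u, x v⟫_ℂ)
    (hp : ∀ u v : H, ⟪p u, v⟫_ℂ = ⟪u, p v⟫_ℂ)
    (ψ : H) (hψ : ‖ψ‖ = 1)
    (hxmean : ⟪ψ, x ψ⟫_ℂ = 0) (hpmean : ⟪ψ, p ψ⟫_ℂ = 0)
    (α β : ℝ) (hα : 0 ≤ α) (hβ : 0 ≤ β)
    (Δx Δp : ℝ) (hΔx0 : 0 ≤ Δx) (hΔp0 : 0 ≤ Δp)
    (hΔx : ((Δx ^ 2 : ℝ) : ℂ) = ⟪ψ, x (x ψ)⟫_ℂ)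
    (hΔp : ((Δp ^ 2 : ℝ) : ℂ) = ⟪ψ, p (p ψ)⟫_ℂ)
    (hcomm : x (p ψ) - p (x ψ) =
      Complex.I • (ψ + (α : ℂ) • x (x ψ) + (β : ℂ) • p (p ψ))) :
    Δx * Δp ≥ (1 / 2) * (1 + α * Δx ^ 2 + β * Δp ^ 2) := by
  set a : ℂ := ⟪x ψ, p ψ⟫_ℂ with ha
  have hψψ : ⟪ψ, ψ⟫_ℂ = 1 := by
    rw [inner_self_eq_norm_sq_to_K, hψ]; norm_num
  -- compute ⟨ψ, [x,p]ψ⟩ two ways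
  have key : a - starRingEnd ℂ a = Complex.I * (1 + α * Δx ^ 2 + β * Δp ^ 2) := by
    have h1 : ⟪ψ, x (p ψ)⟫_ℂ = a := (hx ψ (p ψ)).symm
    have h2 : ⟪ψ, p (x ψ)⟫_ℂ = starRingEnd ℂ a := by
      rw [← hp ψ (x ψ), ha, ← inner_conj_symm]
    have := congrArg (fun v => ⟪ψ, v⟫_ℂ) hcomm
    simp only [inner_sub_right, inner_smul_right, inner_add_right, h1, h2, hψψ,
      ← hΔx, ← hΔp] at this
    rw [this]
    push_cast
    ring
  -- norms
  have hnx : ‖x ψ‖ = Δx := by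
    have : (((‖x ψ‖ : ℝ) ^ 2 : ℝ) : ℂ) = ((Δx ^ 2 : ℝ) : ℂ) := by
      rw [hΔx, ← hx ψ (x ψ), inner_self_eq_norm_sq_to_K]; norm_cast
    have h2 : ‖x ψ‖ ^ 2 = Δx ^ 2 := by exact_mod_cast this
    nlinarith [norm_nonneg (x ψ)]
  have hnp : ‖p ψ‖ = Δp := by
    have : (((‖p ψ‖ : ℝ) ^ 2 : ℝ) : ℂ) = ((Δp ^ 2 : ℝ) : ℂ) := by
      rw [hΔp, ← hp ψ (p ψ), inner_self_eq_norm_sq_to_K]; norm_cast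
    have h2 : ‖p ψ‖ ^ 2 = Δp ^ 2 := by exact_mod_cast this
    nlinarith [norm_nonneg (p ψ)]
  -- a - conj a = 2i Im a
  have him : (2 : ℝ) * a.im = 1 + α * Δx ^ 2 + β * Δp ^ 2 := by
    have := congrArg Complex.im key
    simp only [Complex.sub_im, Complex.conj_im, Complex.mul_im] at this
    push_cast at this
    simp [← Complex.ofReal_pow, Complex.ofReal_re] at this
    linarith
  have habs : |a.im| ≤ ‖a‖ := Complex.abs_im_le_norm a
  have hcs : ‖a‖ ≤ ‖x ψ‖ * ‖p ψ‖ := by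
    simpa [ha] using norm_inner_le_norm (𝕜 := ℂ) (x ψ) (p ψ)
  rw [hnx, hnp] at hcs
  have : |a.im| ≤ Δx * Δp := le_trans habs hcs
  have h3 : a.im ≤ Δx * Δp := le_trans (le_abs_self _) this
  linarith
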